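/- arXiv:0710.5583 — 2 statements merged into one kernel-verified Lean document; each statement's English description precedes it below -/
import Mathlib

section
/- Let g : ℝ → ℝ be continuous with g(0) = 0, satisfying: lim_{s→0} g(s)/s = -ρ for some ρ > 0, and for all a > 0 there exists C_a > 0 with |g(s)| ≤ C_a e^{a s²} for all s > 0. Let G(s) = ∫₀^{|s|} g(t) dt. Then for every a > 0 there exists C_a > 0 such that G(s) ≤ -ρ s²/4 + C_a (e^{a s²} - 1) for all s ∈ ℝ. -/
open Filter

/-- pointwise upper bound on the primitive `G` of `g`. -/
theorem primitive_upper_bound (g : ℝ → ℝ) (hg : Continuous g) (hg0 : g 0 = 0)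
    (ρ : ℝ) (hρ : 0 < ρ)
    (hlim : Tendsto (fun s => g s / s) (nhdsWithin 0 {(0 : ℝ)}ᶜ) (nhds (-ρ)))
    (hgrowth : ∀ a : ℝ, 0 < a → ∃ C : ℝ, 0 < C ∧ ∀ s : ℝ, 0 < s → |g s| ≤ C * Real.exp (a * s ^ 2))
    (G : ℝ → ℝ) (hG : ∀ s : ℝ, G s = ∫ t in (0 : ℝ)..|s|, g t) :
    ∀ a : ℝ, 0 < a → ∃ C : ℝ, 0 < C ∧
      ∀ s : ℝ, G s ≤ -ρ * s ^ 2 / 4 + C * (Real.exp (a * s ^ 2) - 1) := by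
  intro a ha
  obtain ⟨C, hC, hCb⟩ := hgrowth a ha
  have h2 : ∀ᶠ x in nhdsWithin 0 {(0 : ℝ)}ᶜ, g x / x < -ρ/2 :=
    hlim.eventually_lt_const (by linarith)
  obtain ⟨δ, hδ, hδb'⟩ := Metric.mem_nhdsWithin_iff.mp h2
  have hδb : ∀ x : ℝ, dist x 0 < δ → x ∈ ({(0:ℝ)}ᶜ : Set ℝ) → g x / x < -ρ/2 := by
    intro x hx hx'
    exact hδb' ⟨Metric.mem_ball.mpr hx, hx'⟩
  set K : ℝ := ρ/(4*a) + C/(2*a*δ) with hK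
  have hKpos : 0 < K := by positivity
  clear_value K
  refine ⟨K, hKpos, fun s => ?_⟩
  set r := |s| with hr
  have hr0 : 0 ≤ r := abs_nonneg s
  set b : ℝ → ℝ := fun t => -(ρ/2)*t + K*(2*a*t*Real.exp (a*t^2)) with hb
  have hbc : Continuous b := by fun_prop
  -- pointwise bound on [0, r]
  have hpt : ∀ t ∈ Set.Icc (0:ℝ) r, g t ≤ b t := by
    intro t ht
    rcases eq_or_lt_of_le ht.1 with h0 | h0t
    · simp [hb, ← h0, hg0]
    · have hKt : 0 ≤ K*(2*a*t*Real.exp (a*t^2)) := by positivity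
      by_cases hlt : t < δ
      · have hmem : t ∈ ({(0:ℝ)}ᶜ : Set ℝ) := by
          simp [ne_of_gt h0t]
        have hd : dist t (0:ℝ) < δ := by
          simpa [Real.dist_eq, abs_of_pos h0t] using hlt
        have := hδb t hd hmem
        have hgl : g t < -ρ/2 * t := (div_lt_iff₀ h0t).mp this
        simp only [hb]
        linarith
      · push_neg at hlt
        set E := Real.exp (a*t^2) with hE'
        have hE : 1 ≤ E := Real.one_le_exp (by positivity)
        have hgle : g t ≤ C * E := le_trans (le_abs_self _) (hCb t h0t)
        have key : K*(2*a*t*E) = (ρ*t/2)*E + C*(t/δ)*E := by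
          rw [hK]; field_simp; ring
        have k1 : ρ*t/2 ≤ (ρ*t/2)*E :=
          le_mul_of_one_le_right (by positivity) hE
        have h1d : (1:ℝ) ≤ t/δ := (one_le_div hδ).mpr hlt
        have hE0 : (0:ℝ) ≤ E := by linarith
        have k2 : C*E ≤ C*(t/δ)*E := by
          nlinarith [mul_nonneg (mul_nonneg hC.le hE0) (by linarith : (0:ℝ) ≤ t/δ - 1)]
        simp only [hb, key]
        linarith
  -- antiderivative
  have hF : ∀ t : ℝ, HasDerivAt (fun u : ℝ => -ρ*u^2/4 + K*(Real.exp (a*u^2)-1)) (b t) t := by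
    intro t
    have hp : HasDerivAt (fun u : ℝ => u^2) (2*t) t := by
      simpa using hasDerivAt_pow 2 t
    have h1 : HasDerivAt (fun u : ℝ => -ρ*u^2/4) (-ρ*(2*t)/4) t :=
      (hp.const_mul (-ρ)).div_const 4
    have h2 : HasDerivAt (fun u : ℝ => K*(Real.exp (a*u^2)-1))
        (K*(Real.exp (a*t^2)*(a*(2*t)))) t :=
      (((hp.const_mul a).exp).sub_const 1).const_mul K
    have := h1.add h2
    convert this using 1
    all_goals try simp only [hb]
    all_goals first | rfl | ring
  have hint : (∫ t in (0:ℝ)..r, b t) = -ρ*r^2/4 + K*(Real.exp (a*r^2) - 1) := by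
    rw [intervalIntegral.integral_eq_sub_of_hasDerivAt (fun t _ => hF t)
      (hbc.intervalIntegrable 0 r)]
    simp
  have hmono : (∫ t in (0:ℝ)..r, g t) ≤ ∫ t in (0:ℝ)..r, b t :=
    intervalIntegral.integral_mono_on hr0 (hg.intervalIntegrable 0 r)
      (hbc.intervalIntegrable 0 r) hpt
  have hsq : r^2 = s^2 := sq_abs s
  calc G s = ∫ t in (0:ℝ)..r, g t := hG s
    _ ≤ ∫ t in (0:ℝ)..r, b t := hmono
    _ = -ρ*r^2/4 + K*(Real.exp (a*r^2) - 1) := hint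
    _ = -ρ*s^2/4 + K*(Real.exp (a*s^2) - 1) := by rw [hsq]
end

section
/- Let N = 2 and define T(v) = ½‖∇v‖²_{L²} and P(v) = ∫_{ℝ²} G(v) dx for v ∈ H¹(ℝ²), with G as in the Berestycki–Gallouet–Kavian setting ((g0)-(g3)). Let m := min{ S(v) : v ∈ H¹(ℝ²)\{0}, P(v) = 0 } where S(v) = T(v) - P(v). Then m = inf{ T(v) : v ∈ H¹(ℝ²)\{0}, P(v) ≥ 0 }, and this infimum is attained. -/
open MeasureTheory Filter

open Topology

noncomputable def Tfun (v : EuclideanSpace ℝ (Fin 2) → ℝ) : ℝ :=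
  (1 / 2) * ∫ x, ‖fderiv ℝ v x‖ ^ 2

def InH1 (v : EuclideanSpace ℝ (Fin 2) → ℝ) : Prop :=
  MemLp v 2 volume ∧ Differentiable ℝ v ∧ MemLp (fun x => fderiv ℝ v x) 2 volume



section GBasics

variable {g : ℝ → ℝ} {ρ : ℝ} {G : ℝ → ℝ}

lemma aux_g_zero (hgodd : ∀ s, g (-s) = -g s) : g 0 = 0 := by
  have := hgodd 0; simp at this; linarith

lemma aux_g_lin (hgc : Continuous g) (hgodd : ∀ s, g (-s) = -g s) (hρ : 0 < ρ)
    (hlim : Tendsto (fun s => g s / s) (nhdsWithin 0 {(0 : ℝ)}ᶜ) (nhds (-ρ)))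
    {b : ℝ} (hb : 0 < b) :
    ∃ K : ℝ, 0 < K ∧ ∀ t : ℝ, |t| ≤ b → |g t| ≤ K * |t| := by
  rw [Metric.tendsto_nhdsWithin_nhds]  at hlim
  obtain ⟨δ, hδ, hδ'⟩ := hlim ρ hρ
  -- max of |g| on [-b, b]
  obtain ⟨t₀, -, ht₀⟩ := isCompact_Icc.exists_isMaxOn (Set.nonempty_Icc.2 (by linarith : -b ≤ b))
    (hgc.abs.continuousOn (s := Set.Icc (-b) b))
  set M := |g t₀| with hM
  refine ⟨2 * ρ + (M + 1) / (δ / 2) + 1, by positivity, fun t ht => ?_⟩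
  rcases eq_or_ne t 0 with rfl | ht0
  · simp [aux_g_zero hgodd]
  rcases le_or_gt |t| (δ / 2) with hcase | hcase
  · have h1 : |g t / t - -ρ| < ρ := by
      refine hδ' (by simpa using ht0) ?_
      rw [Real.dist_eq, sub_zero]
      linarith
    have h2 : |g t / t| < 2 * ρ := by
      have := abs_sub_abs_le_abs_sub (g t / t) (-ρ)
      rw [abs_neg, abs_of_pos hρ] at this
      linarith
    have h3 : |g t| = |g t / t| * |t| := by
      rw [← abs_mul, div_mul_cancel₀ _ (by simpa using ht0)]
    rw [h3]
    have hpos : (0:ℝ) < |t| := abs_pos.2 ht0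
    have hMnn : 0 ≤ M := abs_nonneg _
    have hX : 0 ≤ (M + 1) / (δ / 2) := by positivity
    nlinarith [mul_le_mul_of_nonneg_right h2.le (abs_nonneg t)]
  · have hMt : |g t| ≤ M := ht₀ (by constructor <;> [linarith [neg_abs_le t]; linarith [le_abs_self t]])
    have : M ≤ (M + 1) / (δ / 2) * |t| := by
      rw [div_mul_eq_mul_div, le_div_iff₀ (by positivity)]
      nlinarith [abs_nonneg (g t), hMt]
    nlinarith [abs_nonneg t, abs_nonneg (g t)]

end GBasics



section GB2

variable {g : ℝ → ℝ} {ρ : ℝ} {G : ℝ → ℝ}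

lemma aux_G_even (hG : ∀ s : ℝ, G s = ∫ t in (0 : ℝ)..|s|, g t) (s : ℝ) : G (-s) = G s := by
  rw [hG, hG, abs_neg]

lemma aux_G_zero (hG : ∀ s : ℝ, G s = ∫ t in (0 : ℝ)..|s|, g t) : G 0 = 0 := by
  rw [hG]; simp

lemma aux_G_cont (hgc : Continuous g)
    (hG : ∀ s : ℝ, G s = ∫ t in (0 : ℝ)..|s|, g t) : Continuous G := by
  have h1 : Continuous (fun c : ℝ => ∫ t in (0:ℝ)..c, g t) := by
    rw [continuous_iff_continuousAt]
    exact fun c => ((hgc.integral_hasStrictDerivAt 0 c).hasDerivAt).continuousAt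
  have : G = (fun c : ℝ => ∫ t in (0:ℝ)..c, g t) ∘ (fun s : ℝ => |s|) := by
    funext s; exact hG s
  rw [this]
  exact h1.comp continuous_abs

lemma aux_G_quad (hgc : Continuous g) (hgodd : ∀ s, g (-s) = -g s) (hρ : 0 < ρ)
    (hlim : Tendsto (fun s => g s / s) (nhdsWithin 0 {(0 : ℝ)}ᶜ) (nhds (-ρ)))
    (hG : ∀ s : ℝ, G s = ∫ t in (0 : ℝ)..|s|, g t)
    {b : ℝ} (hb : 0 < b) :
    ∃ K : ℝ, 0 < K ∧ ∀ s : ℝ, |s| ≤ b → |G s| ≤ K * s ^ 2 := by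
  obtain ⟨K, hK, hKb⟩ := aux_g_lin hgc hgodd hρ hlim hb
  refine ⟨K, hK, fun s hs => ?_⟩
  have h1 : ∀ x ∈ Set.uIoc (0:ℝ) |s|, ‖g x‖ ≤ K * |s| := by
    intro x hx
    rw [Set.uIoc_of_le (abs_nonneg s)] at hx
    have hx1 : 0 < x := hx.1
    have hx2 : x ≤ |s| := hx.2
    have : |g x| ≤ K * |x| := hKb x (by rw [abs_of_pos hx1]; linarith)
    rw [Real.norm_eq_abs]
    rw [abs_of_pos hx1] at this
    nlinarith
  have h2 := intervalIntegral.norm_integral_le_of_norm_le_const h1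
  rw [← hG s] at h2
  rw [Real.norm_eq_abs] at h2
  calc |G s| ≤ K * |s| * abs (|s| - 0) := h2
    _ = K * s ^ 2 := by rw [sub_zero, abs_abs]; rw [← sq_abs]; ring

lemma aux_G_near (hgc : Continuous g) (hgodd : ∀ s, g (-s) = -g s) (hρ : 0 < ρ)
    (hlim : Tendsto (fun s => g s / s) (nhdsWithin 0 {(0 : ℝ)}ᶜ) (nhds (-ρ)))
    (hG : ∀ s : ℝ, G s = ∫ t in (0 : ℝ)..|s|, g t)
    {ε : ℝ} (hε : 0 < ε) :
    ∃ δ : ℝ, 0 < δ ∧ ∀ s : ℝ, |s| ≤ δ → |G s + ρ / 2 * s ^ 2| ≤ ε * s ^ 2 := by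
  rw [Metric.tendsto_nhdsWithin_nhds] at hlim
  obtain ⟨δ, hδ, hδ'⟩ := hlim ε hε
  refine ⟨δ / 2, by linarith, fun s hs => ?_⟩
  -- pointwise bound |g x + ρ x| ≤ ε |x| for |x| ≤ δ/2
  have key : ∀ x : ℝ, |x| ≤ δ / 2 → |g x + ρ * x| ≤ ε * |x| := by
    intro x hx
    rcases eq_or_ne x 0 with rfl | hx0
    · simp [aux_g_zero hgodd]
    · have h1 : |g x / x - -ρ| < ε := by
        refine hδ' (by simpa using hx0) ?_
        rw [Real.dist_eq, sub_zero]; linarith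
      have hxpos : (0:ℝ) < |x| := abs_pos.2 hx0
      have h2 : |g x + ρ * x| = |g x / x - -ρ| * |x| := by
        rw [← abs_mul]
        congr 1
        field_simp
        ring
      rw [h2]
      nlinarith
  -- rewrite G s + ρ/2 s² as an interval integral
  have hρt : ∀ c : ℝ, (∫ t in (0:ℝ)..c, ρ * t) = ρ / 2 * c ^ 2 := by
    intro c
    rw [intervalIntegral.integral_const_mul, integral_id]
    ring
  have hadd : G s + ρ / 2 * s ^ 2 = ∫ t in (0:ℝ)..|s|, (g t + ρ * t) := by
    rw [intervalIntegral.integral_add (hgc.intervalIntegrable _ _)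
      (show IntervalIntegrable (fun t : ℝ => ρ * t) MeasureTheory.volume 0 |s| from
        (continuous_const.mul continuous_id').intervalIntegrable _ _)]
    rw [hG s, hρt, sq_abs]
  have h1 : ∀ x ∈ Set.uIoc (0:ℝ) |s|, ‖g x + ρ * x‖ ≤ ε * |s| := by
    intro x hx
    rw [Set.uIoc_of_le (abs_nonneg s)] at hx
    have hx1 : 0 < x := hx.1
    have hx2 : x ≤ |s| := hx.2
    have : |g x + ρ * x| ≤ ε * |x| := key x (by rw [abs_of_pos hx1]; linarith)
    rw [Real.norm_eq_abs]
    rw [abs_of_pos hx1] at this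
    nlinarith
  have h2 := intervalIntegral.norm_integral_le_of_norm_le_const h1
  rw [← hadd, Real.norm_eq_abs] at h2
  calc |G s + ρ / 2 * s ^ 2| ≤ ε * |s| * abs (|s| - 0) := h2
    _ = ε * s ^ 2 := by rw [sub_zero, abs_abs, ← sq_abs]; ring

end GB2



lemma aux_psi {a b : ℝ} (ha : 0 < a) (hab : a < b) :
    ∃ ψ φ : ℝ → ℝ, Continuous φ ∧ (∀ t, 0 ≤ φ t ∧ φ t ≤ 1) ∧
      (∀ s, HasDerivAt ψ (φ s) s) ∧ (∀ s, |s| ≤ a → ψ s = s) ∧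
      (∀ s, |ψ s| ≤ |s|) ∧ (∀ s, |ψ s| ≤ b) ∧
      (∀ s, a ≤ |s| → a ≤ |ψ s|) ∧ (∀ s, ψ s = 0 → s = 0) := by
  set φ : ℝ → ℝ := fun t => max 0 (min 1 ((b - |t|) / (b - a))) with hφdef
  have hba : (0:ℝ) < b - a := by linarith
  have hφc : Continuous φ := by
    apply continuous_const.max
    apply continuous_const.min
    exact (continuous_const.sub continuous_abs).div_const _
  have hφ01 : ∀ t, 0 ≤ φ t ∧ φ t ≤ 1 := fun t =>
    ⟨le_max_left _ _, max_le zero_le_one (min_le_left _ _)⟩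
  have hφ1 : ∀ t : ℝ, |t| ≤ a → φ t = 1 := by
    intro t ht
    have h : (1:ℝ) ≤ (b - |t|) / (b - a) := by
      rw [le_div_iff₀ hba]; linarith
    simp only [hφdef]
    rw [min_eq_left h, max_eq_right zero_le_one]
  have hφ0 : ∀ t : ℝ, b ≤ |t| → φ t = 0 := by
    intro t ht
    have h : (b - |t|) / (b - a) ≤ 0 := div_nonpos_of_nonpos_of_nonneg (by linarith) hba.le
    simp only [hφdef]
    rw [min_eq_right (h.trans zero_le_one), max_eq_left h]
  have hφeven : ∀ t : ℝ, φ (-t) = φ t := by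
    intro t; simp only [hφdef, abs_neg]
  have habs : ∀ {s t : ℝ}, t ∈ Set.uIcc 0 s → |t| ≤ |s| := by
    intro s t ht
    rw [Set.mem_uIcc] at ht
    rw [abs_le]
    rcases ht with ⟨h1, h2⟩ | ⟨h1, h2⟩
    · constructor <;> [linarith [abs_nonneg s]; linarith [le_abs_self s]]
    · constructor <;> [linarith [neg_abs_le s]; linarith [abs_nonneg s]]
  set ψ : ℝ → ℝ := fun s => ∫ t in (0:ℝ)..s, φ t with hψdef
  have hderiv : ∀ s, HasDerivAt ψ (φ s) s := fun s =>
    (hφc.integral_hasStrictDerivAt 0 s).hasDerivAt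
  have hid : ∀ s : ℝ, |s| ≤ a → ψ s = s := by
    intro s hs
    have h1 : ψ s = ∫ t in (0:ℝ)..s, (1:ℝ) :=
      intervalIntegral.integral_congr (fun t ht => hφ1 t ((habs ht).trans hs))
    rw [h1]
    simp
  have hodd : ∀ s : ℝ, ψ (-s) = -ψ s := by
    intro s
    have h1 : (∫ x in (0:ℝ)..s, φ (-x)) = ∫ x in (-s)..(-(0:ℝ)), φ x :=
      intervalIntegral.integral_comp_neg φ
    have h2 : (∫ x in (0:ℝ)..s, φ (-x)) = ψ s := by
      simp only [hψdef]
      exact intervalIntegral.integral_congr (fun t _ => hφeven t)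
    have h3 : ψ (-s) = -∫ x in (-s)..(0:ℝ), φ x := by
      simp only [hψdef]
      rw [intervalIntegral.integral_symm]
    rw [h3, neg_eq_iff_eq_neg, neg_neg, ← h1.symm.trans h2]
    norm_num
  have hnonneg : ∀ s : ℝ, 0 ≤ s → 0 ≤ ψ s := by
    intro s hs
    exact intervalIntegral.integral_nonneg hs (fun u _ => (hφ01 u).1)
  have hle_self : ∀ s : ℝ, 0 ≤ s → ψ s ≤ s := by
    intro s hs
    have h1 : ψ s ≤ ∫ t in (0:ℝ)..s, (1:ℝ) := by
      apply intervalIntegral.integral_mono_on hs (hφc.intervalIntegrable _ _)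
        (intervalIntegrable_const)
      intro x _
      exact (hφ01 x).2
    simpa using h1
  have hge_a : ∀ s : ℝ, a ≤ s → a ≤ ψ s := by
    intro s hs
    have h1 : ψ a + (∫ t in a..s, φ t) = ψ s :=
      intervalIntegral.integral_add_adjacent_intervals (hφc.intervalIntegrable _ _)
        (hφc.intervalIntegrable _ _)
    have h2 : 0 ≤ ∫ t in a..s, φ t :=
      intervalIntegral.integral_nonneg hs (fun u _ => (hφ01 u).1)
    have h3 : ψ a = a := hid a (by rw [abs_of_pos ha])
    linarith
  have hle_b : ∀ s : ℝ, 0 ≤ s → ψ s ≤ b := by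
    intro s hs
    rcases le_or_gt s b with h | h
    · linarith [hle_self s hs]
    · have h1 : ψ b + (∫ t in b..s, φ t) = ψ s :=
        intervalIntegral.integral_add_adjacent_intervals (hφc.intervalIntegrable _ _)
          (hφc.intervalIntegrable _ _)
      have h2 : (∫ t in b..s, φ t) = ∫ t in b..s, (0:ℝ) := by
        apply intervalIntegral.integral_congr
        intro t ht
        rw [Set.uIcc_of_le h.le, Set.mem_Icc] at ht
        exact hφ0 t (by rw [abs_of_nonneg (by linarith [ha.le, hab.le] : (0:ℝ) ≤ t)]; exact ht.1)
      rw [h2] at h1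
      simp at h1
      linarith [hle_self b (by linarith : (0:ℝ) ≤ b)]
  have habs_psi : ∀ s : ℝ, |ψ s| = ψ |s| := by
    intro s
    rcases le_or_gt 0 s with h | h
    · rw [abs_of_nonneg h, abs_of_nonneg (hnonneg s h)]
    · rw [abs_of_neg h]
      have : ψ s = -ψ (-s) := by rw [← hodd, neg_neg]
      rw [this, abs_neg, abs_of_nonneg (hnonneg (-s) (by linarith))]
  refine ⟨ψ, φ, hφc, hφ01, hderiv, hid, ?_, ?_, ?_, ?_⟩
  · intro s
    rw [habs_psi]
    exact (hle_self _ (abs_nonneg s)).trans (le_refl _)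
  · intro s
    rw [habs_psi]
    exact hle_b _ (abs_nonneg s)
  · intro s hs
    rw [habs_psi]
    exact hge_a _ hs
  · intro s hs
    by_contra h0
    have h1 : 0 < |s| := abs_pos.2 h0
    have h2 : 0 < ψ |s| := by
      rcases le_or_gt |s| a with h | h
      · rw [hid _ (by rwa [abs_abs])]; exact h1
      · linarith [hge_a _ h.le]
    rw [← habs_psi, hs] at h2
    simp at h2



lemma aux_tail {α : Type*} [MeasurableSpace α] {μ : Measure α} {f : α → ℝ} (hfm : Measurable f)
    {Φ : ℝ → ℝ} (hΦ0 : ∀ s, 0 ≤ Φ s)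
    (hInt : Integrable (fun x => Φ (f x)) μ)
    (hfin : ∀ t : ℝ, 1 ≤ t → μ {x | t ≤ f x} ≠ ⊤)
    (htend : Tendsto (fun n : ℕ => (μ {x | (n:ℝ) ≤ f x}).toReal) atTop (𝓝 0))
    {T : ℝ} (hT : 1 ≤ T) (hpos : ∀ t, T ≤ t → μ {x | t ≤ f x} ≠ 0)
    {c : ℝ} (hc : 0 < c) :
    ∃ t, T ≤ t ∧ Φ t * (μ {x | t ≤ f x}).toReal < c := by
  by_contra hcon
  push_neg at hcon
  set w : ℝ → ℝ := fun t => (μ {x | t ≤ f x}).toReal with hw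
  have hwpos : ∀ t, T ≤ t → 0 < w t := fun t ht =>
    ENNReal.toReal_pos (hpos t ht) (hfin t (hT.trans ht))
  have hwmono : ∀ s t : ℝ, 1 ≤ s → s ≤ t → w t ≤ w s := by
    intro s t hs hst
    exact ENNReal.toReal_mono (hfin s hs) (measure_mono (fun x hx => le_trans hst hx))
  have step : ∀ t, T ≤ t → ∃ t', t ≤ t' ∧ T ≤ t' ∧ w t' ≤ w t / 2 := by
    intro t ht
    have h2 : 0 < w t / 2 := by linarith [hwpos t ht]
    have h3 : ∀ᶠ n : ℕ in atTop, (μ {x | (n:ℝ) ≤ f x}).toReal < w t / 2 := by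
      have := htend (Iio_mem_nhds h2)
      simpa using this
    obtain ⟨N, hN⟩ := h3.exists_forall_of_atTop
    obtain ⟨M, hM⟩ := exists_nat_ge (max t N)
    refine ⟨M, ?_, ?_, ?_⟩
    · exact (le_max_left t N).trans hM
    · exact ht.trans ((le_max_left t N).trans hM)
    · exact (hN M (by exact_mod_cast (le_max_right t (N:ℝ)).trans hM)).le
  -- recursively defined sequence
  let seq : ℕ → {t : ℝ // T ≤ t} := fun n =>
    Nat.rec ⟨T, le_rfl⟩ (fun _ p => ⟨(step p.1 p.2).choose, (step p.1 p.2).choose_spec.2.1⟩) n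
  have hseq0 : (seq 0).1 = T := rfl
  have hseq_succ : ∀ n, (seq n).1 ≤ (seq (n+1)).1 ∧ w (seq (n+1)).1 ≤ w (seq n).1 / 2 := by
    intro n
    exact ⟨(step (seq n).1 (seq n).2).choose_spec.1, (step (seq n).1 (seq n).2).choose_spec.2.2⟩
  have hseq_mono : Monotone (fun n => (seq n).1) :=
    monotone_nat_of_le_succ (fun n => (hseq_succ n).1)
  -- block sets
  set E : ℕ → Set α := fun n => {x | (seq n).1 ≤ f x ∧ f x < (seq (n+1)).1} with hE
  have hmeasE : ∀ n, MeasurableSet (E n) := by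
    intro n
    exact (measurableSet_le measurable_const hfm).inter (measurableSet_lt hfm measurable_const)
  have hmeas_ge : ∀ t : ℝ, MeasurableSet {x | t ≤ f x} :=
    fun t => measurableSet_le measurable_const hfm
  have hEsub : ∀ n, E n ⊆ {x | (seq n).1 ≤ f x} := fun n x hx => hx.1
  have hμE : ∀ n, (μ (E n)).toReal = w (seq n).1 - w (seq (n+1)).1 := by
    intro n
    have hset : E n = {x | (seq n).1 ≤ f x} \ {x | (seq (n+1)).1 ≤ f x} := by
      ext x
      simp only [hE, Set.mem_setOf_eq, Set.mem_diff, not_le]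
    have hsub : {x | (seq (n+1)).1 ≤ f x} ⊆ {x | (seq n).1 ≤ f x} :=
      fun x hx => le_trans (hseq_succ n).1 hx
    rw [hset, measure_diff hsub (hmeas_ge _).nullMeasurableSet
      (hfin _ (hT.trans (seq (n+1)).2))]
    rw [ENNReal.toReal_sub_of_le (measure_mono hsub) (hfin _ (hT.trans (seq n).2))]
  have hμEfin : ∀ n, μ (E n) ≠ ⊤ := by
    intro n
    exact fun h => (hfin _ (hT.trans (seq n).2)) (eq_top_iff.2 (h ▸ measure_mono (hEsub n)))
  -- lower bound on each block integral
  have hlow : ∀ n, c / 2 ≤ ∫ x in E n, Φ (f x) ∂μ := by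
    intro n
    have hwn := hwpos _ (seq n).2
    have hconst : ∀ x ∈ E n, c / w (seq n).1 ≤ Φ (f x) := by
      intro x hx
      have hTfx : T ≤ f x := le_trans (seq n).2 hx.1
      have h1 : c ≤ Φ (f x) * w (f x) := hcon (f x) hTfx
      have h2 : 0 < w (f x) := hwpos _ hTfx
      have h3 : w (f x) ≤ w (seq n).1 := hwmono _ _ (hT.trans (seq n).2) hx.1
      rw [div_le_iff₀ hwn]
      calc c ≤ Φ (f x) * w (f x) := h1
        _ ≤ Φ (f x) * w (seq n).1 := by
            exact mul_le_mul_of_nonneg_left h3 (hΦ0 _)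
    have hint1 : IntegrableOn (fun _ : α => c / w (seq n).1) (E n) μ :=
      integrableOn_const (hμEfin n)
    have hint2 : IntegrableOn (fun x => Φ (f x)) (E n) μ := hInt.integrableOn
    have h4 := setIntegral_mono_on hint1 hint2 (hmeasE n) hconst
    rw [setIntegral_const, Measure.real] at h4
    have h5 : w (seq n).1 / 2 ≤ (μ (E n)).toReal := by
      rw [hμE n]
      linarith [(hseq_succ n).2]
    calc c / 2 = c / w (seq n).1 * (w (seq n).1 / 2) := by
          field_simp
        _ ≤ c / w (seq n).1 * (μ (E n)).toReal := by
          apply mul_le_mul_of_nonneg_left h5 (by positivity)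
        _ = (μ (E n)).toReal • (c / w (seq n).1) := by
          rw [smul_eq_mul]; ring
        _ ≤ ∫ x in E n, Φ (f x) ∂μ := h4
  -- partial unions
  set S : ℕ → Set α := fun n => {x | T ≤ f x ∧ f x < (seq n).1} with hS
  have hmeasS : ∀ n, MeasurableSet (S n) :=
    fun n => (measurableSet_le measurable_const hfm).inter (measurableSet_lt hfm measurable_const)
  have hSsucc : ∀ n, S (n+1) = S n ∪ E n := by
    intro n
    ext x
    simp only [hS, hE, Set.mem_setOf_eq, Set.mem_union]
    constructor
    · rintro ⟨h1, h2⟩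
      rcases lt_or_ge (f x) (seq n).1 with h | h
      · exact Or.inl ⟨h1, h⟩
      · exact Or.inr ⟨h, h2⟩
    · rintro (⟨h1, h2⟩ | ⟨h1, h2⟩)
      · exact ⟨h1, h2.trans_le (hseq_succ n).1⟩
      · exact ⟨le_trans (seq n).2 h1, h2⟩
  have hdisj : ∀ n, Disjoint (S n) (E n) := by
    intro n
    rw [Set.disjoint_left]
    rintro x ⟨-, h2⟩ ⟨h3, -⟩
    exact absurd h3 (not_le.2 h2)
  have hSint : ∀ n : ℕ, (n : ℝ) * (c / 2) ≤ ∫ x in S n, Φ (f x) ∂μ := by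
    intro n
    induction n with
    | zero =>
      simp only [Nat.cast_zero, zero_mul]
      apply setIntegral_nonneg (hmeasS 0)
      intro x _
      exact hΦ0 _
    | succ n ih =>
      rw [hSsucc n] at *
      rw [setIntegral_union (hdisj n) (hmeasE n) hInt.integrableOn hInt.integrableOn]
      push_cast
      have := hlow n
      linarith
  obtain ⟨n, hn⟩ := exists_nat_gt ((∫ x, Φ (f x) ∂μ) / (c / 2))
  have h6 : ∫ x in S n, Φ (f x) ∂μ ≤ ∫ x, Φ (f x) ∂μ :=
    setIntegral_le_integral hInt (Eventually.of_forall (fun x => hΦ0 _))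
  have h7 := hSint n
  rw [div_lt_iff₀ (by positivity : (0:ℝ) < c / 2)] at hn
  linarith



section GB3
variable {g : ℝ → ℝ} {ρ : ℝ} {G : ℝ → ℝ}

lemma aux_G_ratio (hgc : Continuous g) (hgodd : ∀ s, g (-s) = -g s) (hρ : 0 < ρ)
    (hlim : Tendsto (fun s => g s / s) (nhdsWithin 0 {(0 : ℝ)}ᶜ) (nhds (-ρ)))
    (hG : ∀ s : ℝ, G s = ∫ t in (0 : ℝ)..|s|, g t) (c : ℝ) :
    Tendsto (fun n : ℕ => G ((1/((n:ℝ)+2)) * c) / (1/((n:ℝ)+2))^2) atTop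
      (𝓝 (-(ρ/2) * c^2)) := by
  rw [Metric.tendsto_atTop]
  intro ε hε
  obtain ⟨δ, hδ, hδ'⟩ := aux_G_near hgc hgodd hρ hlim hG (ε := ε/(2*(c^2+1))) (by positivity)
  obtain ⟨N, hN⟩ := exists_nat_ge (|c|/δ)
  refine ⟨N, fun n hn => ?_⟩
  set θ : ℝ := 1/((n:ℝ)+2) with hθ
  have hθpos : 0 < θ := by positivity
  have hcn : |c| ≤ δ * ((n:ℝ)+2) := by
    rw [div_le_iff₀ hδ] at hN
    have : (N:ℝ) ≤ (n:ℝ) + 2 := by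
      have : (N:ℝ) ≤ (n:ℝ) := by exact_mod_cast hn
      linarith
    nlinarith
  have hsmall : |θ * c| ≤ δ := by
    rw [abs_mul, abs_of_pos hθpos, hθ]
    rw [div_mul_eq_mul_div, one_mul, div_le_iff₀ (by positivity : (0:ℝ) < (n:ℝ)+2)]
    linarith
  have hb := hδ' (θ * c) hsmall
  rw [Real.dist_eq]
  have h1 : G (θ * c) / θ^2 - -(ρ/2) * c^2 = (G (θ*c) + ρ/2 * (θ*c)^2) / θ^2 := by
    field_simp
    ring
  rw [h1, abs_div, abs_of_pos (by positivity : (0:ℝ) < θ^2)]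
  rw [div_lt_iff₀ (by positivity : (0:ℝ) < θ^2)]
  have h2 : ε / (2*(c^2+1)) * (θ*c)^2 = (ε * c^2 / (2*(c^2+1))) * θ^2 := by ring
  rw [h2] at hb
  have h3 : ε * c^2 / (2*(c^2+1)) < ε := by
    rw [div_lt_iff₀ (by positivity)]
    nlinarith
  calc |G (θ*c) + ρ/2 * (θ*c)^2| ≤ ε * c^2 / (2*(c^2+1)) * θ^2 := hb
    _ < ε * θ^2 := by nlinarith [sq_nonneg θ, mul_pos hθpos hθpos]


set_option maxHeartbeats 1000000 in
/-- in dimension 2, the least energy level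
`m = min{S(v) : v ≠ 0, P(v) = 0}` coincides with `inf{T(v) : v ≠ 0, P(v) ≥ 0}`,
and the latter infimum is attained. -/
theorem min_on_P_eq_min_T
    (g : ℝ → ℝ) (hgc : Continuous g) (hgodd : ∀ s, g (-s) = -g s)
    (ρ : ℝ) (hρ : 0 < ρ)
    (hlim : Tendsto (fun s => g s / s) (nhdsWithin 0 {(0 : ℝ)}ᶜ) (nhds (-ρ)))
    (hgrowth : ∀ a : ℝ, 0 < a → ∃ C : ℝ, 0 < C ∧ ∀ s : ℝ, 0 < s → |g s| ≤ C * Real.exp (a * s ^ 2))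
    (hG3 : ∃ ξ : ℝ, 0 < ξ ∧ 0 < ∫ t in (0 : ℝ)..ξ, g t)
    (G : ℝ → ℝ) (hG : ∀ s : ℝ, G s = ∫ t in (0 : ℝ)..|s|, g t)
    (P : (EuclideanSpace ℝ (Fin 2) → ℝ) → ℝ) (hP : ∀ v, P v = ∫ x, G (v x))
    (S : (EuclideanSpace ℝ (Fin 2) → ℝ) → ℝ) (hS : ∀ v, S v = Tfun v - P v)
    (m : ℝ) (hm : 0 < m)
    (hmin : IsLeast (S '' {v | InH1 v ∧ ¬ v =ᵐ[volume] 0 ∧ P v = 0}) m) :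
    IsLeast (Tfun '' {v | InH1 v ∧ ¬ v =ᵐ[volume] 0 ∧ 0 ≤ P v}) m := by
  obtain ⟨⟨u0, ⟨hu0H, hu0ne, hu0P⟩, hu0S⟩, hlb⟩ := hmin
  have hGeven := aux_G_even hG
  have hGcont := aux_G_cont hgc hG
  have hGabs : ∀ r : ℝ, G |r| = G r := by
    intro r
    rcases abs_choice r with h | h
    · rw [h]
    · rw [h, aux_G_even hG]
  constructor
  · -- m is attained by u0
    refine ⟨u0, ⟨hu0H, hu0ne, by rw [hu0P]⟩, ?_⟩
    have h1 := hS u0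
    rw [hu0P, sub_zero] at h1
    rw [← hu0S, h1]
  · -- m is a lower bound
    rintro τ ⟨v, ⟨hvH, hvne, hvP⟩, rfl⟩
    rcases eq_or_lt_of_le hvP with hPv | hPv
    · -- P v = 0 : direct
      have h1 : S v ∈ S '' {v | InH1 v ∧ ¬ v =ᵐ[volume] 0 ∧ P v = 0} :=
        ⟨v, ⟨hvH, hvne, hPv.symm⟩, rfl⟩
      have h2 := hlb h1
      rw [hS v, ← hPv, sub_zero] at h2
      exact h2
    -- P v > 0
    have hvcont : Continuous v := hvH.2.1.continuous
    have hvmeas : Measurable v := hvcont.measurable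
    -- integrability of v ^ 2 and ‖∇v‖ ^ 2
    have hIv2 : Integrable (fun x => (v x) ^ 2) volume := by
      have h := hvH.1.integrable_norm_rpow two_ne_zero ENNReal.ofNat_ne_top
      refine h.congr (Eventually.of_forall (fun x => ?_))
      show ‖v x‖ ^ (ENNReal.toReal 2) = _
      rw [show (ENNReal.toReal 2) = ((2:ℕ):ℝ) by simp, Real.rpow_natCast,
        Real.norm_eq_abs, sq_abs]
    have hIdv2 : Integrable (fun x => ‖fderiv ℝ v x‖ ^ 2) volume := by
      have h := hvH.2.2.integrable_norm_rpow two_ne_zero ENNReal.ofNat_ne_top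
      refine h.congr (Eventually.of_forall (fun x => ?_))
      show ‖(fderiv ℝ v x : _)‖ ^ (ENNReal.toReal 2) = _
      rw [show (ENNReal.toReal 2) = ((2:ℕ):ℝ) by simp, Real.rpow_natCast]
    -- G ∘ v is integrable
    have hIGv : Integrable (fun x => G (v x)) volume := by
      by_contra h
      rw [hP v, integral_undef h] at hPv
      exact absurd hPv (lt_irrefl 0)
    -- the truncation: a, b, ψ, φ with positive truncated functional
    obtain ⟨a, b, ha, hab, ψ, φ, hφc, hφ01, hψd, hψid, hψabs, hψb, hψ0, hF1pos⟩ :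
        ∃ a b : ℝ, 0 < a ∧ a < b ∧ ∃ ψ φ : ℝ → ℝ, Continuous φ ∧
          (∀ t, 0 ≤ φ t ∧ φ t ≤ 1) ∧ (∀ s, HasDerivAt ψ (φ s) s) ∧
          (∀ s, |s| ≤ a → ψ s = s) ∧ (∀ s, |ψ s| ≤ |s|) ∧ (∀ s, |ψ s| ≤ b) ∧
          (∀ s, ψ s = 0 → s = 0) ∧ 0 < ∫ x, G (ψ (v x)) := by
      by_cases hbdd : ∃ t : ℝ, 1 ≤ t ∧ volume {x | t ≤ |v x|} = 0
      · -- essentially bounded case: truncation does nothing a.e.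
        obtain ⟨t, ht1, ht0⟩ := hbdd
        obtain ⟨ψ, φ, h1, h2, h3, h4, h5, h6, h7, h8⟩ :=
          aux_psi (show (0:ℝ) < t by linarith) (show t < t + 1 by linarith)
        refine ⟨t, t + 1, by linarith, by linarith, ψ, φ, h1, h2, h3, h4, h5, h6, h8, ?_⟩
        have hae : ∀ᵐ x ∂(volume : Measure (EuclideanSpace ℝ (Fin 2))), ¬ (t ≤ |v x|) := by
          rw [ae_iff]
          simpa using ht0
        have hcongr : (fun x => G (ψ (v x))) =ᵐ[volume] fun x => G (v x) := by
          filter_upwards [hae] with x hx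
          push_neg at hx
          rw [h4 (v x) (by linarith)]
        rw [integral_congr_ae hcongr, ← hP v]
        exact hPv
      · -- main case
        push_neg at hbdd
        have hfin : ∀ t : ℝ, 1 ≤ t → volume {x | t ≤ |v x|} ≠ ⊤ := by
          intro t ht
          have hsub : {x : EuclideanSpace ℝ (Fin 2) | t ≤ |v x|} ⊆
              {x | 1 ≤ (fun x => (v x) ^ 2) x} := by
            intro x hx
            simp only [Set.mem_setOf_eq] at hx ⊢
            nlinarith [abs_nonneg (v x), sq_abs (v x)]
          exact fun h =>
            absurd ((measure_mono hsub).trans_lt (hIv2.measure_ge_lt_top one_pos))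
              (by rw [h]; exact not_lt_of_ge le_top)
        have hmeas_ge : ∀ t : ℝ, MeasurableSet {x : EuclideanSpace ℝ (Fin 2) | t ≤ |v x|} :=
          fun t => measurableSet_le measurable_const hvmeas.abs
        have hmeas_gt : ∀ t : ℝ, MeasurableSet {x : EuclideanSpace ℝ (Fin 2) | t < |v x|} :=
          fun t => measurableSet_lt measurable_const hvmeas.abs
        have htend0 : Tendsto (fun n : ℕ => volume {x : EuclideanSpace ℝ (Fin 2) | (n:ℝ) ≤ |v x|})
            atTop (𝓝 0) := by
          have hiter : ⋂ n : ℕ, {x : EuclideanSpace ℝ (Fin 2) | (n:ℝ) ≤ |v x|} = ∅ := by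
            ext x
            simp only [Set.mem_iInter, Set.mem_setOf_eq, Set.mem_empty_iff_false, iff_false,
              not_forall, not_le]
            obtain ⟨n, hn⟩ := exists_nat_gt |v x|
            exact ⟨n, hn⟩
          have h := tendsto_measure_iInter_atTop
            (fun n : ℕ => (hmeas_ge (n:ℝ)).nullMeasurableSet)
            (fun i j hij => fun x hx => by
              simp only [Set.mem_setOf_eq] at hx ⊢
              exact le_trans (by exact_mod_cast hij) hx)
            ⟨1, by simpa using hfin 1 le_rfl⟩
          rw [hiter, measure_empty] at h
          exact h
        have htendR : Tendsto
            (fun n : ℕ => (volume {x : EuclideanSpace ℝ (Fin 2) | (n:ℝ) ≤ |v x|}).toReal)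
            atTop (𝓝 0) := by
          have h := (ENNReal.tendsto_toReal (a := 0) (by simp)).comp htend0
          exact h
        -- the tail integrals tend to 0
        have htail : Tendsto
            (fun n : ℕ => ∫ x in {x : EuclideanSpace ℝ (Fin 2) | (n:ℝ) < |v x|}, |G (v x)|)
            atTop (𝓝 0) := by
          have hGvmeas : AEStronglyMeasurable (fun x => |G (v x)|)
              (volume : Measure (EuclideanSpace ℝ (Fin 2))) :=
            ((hGcont.comp hvcont).abs).aestronglyMeasurable
          have h := tendsto_integral_of_dominated_convergence (μ := volume)
            (F := fun n : ℕ => Set.indicator {x : EuclideanSpace ℝ (Fin 2) | (n:ℝ) < |v x|}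
              (fun x => |G (v x)|))
            (f := fun _ => (0:ℝ)) (bound := fun x => |G (v x)|)
            (fun n => hGvmeas.indicator (hmeas_gt _))
            hIGv.abs
            (fun n => Eventually.of_forall (fun x => by
              rw [Real.norm_eq_abs,
                abs_of_nonneg (Set.indicator_nonneg (fun y _ => abs_nonneg _) x)]
              exact Set.indicator_le_self' (fun y _ => abs_nonneg _) x))
            (Eventually.of_forall (fun x => by
              apply tendsto_atTop_of_eventually_const (i₀ := Nat.ceil |v x|)
              intro n hn
              apply Set.indicator_of_notMem
              simp only [Set.mem_setOf_eq, not_lt]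
              exact le_trans (Nat.le_ceil _) (by exact_mod_cast hn)))
          simp only [integral_zero] at h
          refine h.congr (fun n => ?_)
          rw [integral_indicator (hmeas_gt _)]
        -- choose n₀
        have h8pos : 0 < P v / 8 := by linarith
        obtain ⟨n₀, hn₀tail, hn₀1⟩ :
            ∃ n₀ : ℕ, (∫ x in {x : EuclideanSpace ℝ (Fin 2) | ((n₀:ℕ):ℝ) < |v x|}, |G (v x)|)
              < P v / 8 ∧ 1 ≤ (n₀:ℝ) := by
          have h1 := (htail.eventually (eventually_lt_nhds h8pos)).and (eventually_ge_atTop 1)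
          obtain ⟨n₀, hn₀⟩ := h1.exists
          exact ⟨n₀, hn₀.1, by exact_mod_cast hn₀.2⟩
        set T : ℝ := (n₀:ℝ) + 1 with hTdef
        have hT1 : 1 ≤ T := by simp only [hTdef]; linarith
        have hIntΦ : Integrable (fun x => |G (|v x|)|)
            (volume : Measure (EuclideanSpace ℝ (Fin 2))) := by
          refine hIGv.abs.congr (Eventually.of_forall (fun x => ?_))
          show |G (v x)| = |G (|v x|)|
          rw [hGabs]
        obtain ⟨t, htT, hsm⟩ := aux_tail (f := fun x => |v x|) hvmeas.abs
          (Φ := fun s => |G s|) (fun s => abs_nonneg _) hIntΦ hfin htendR hT1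
          (fun t ht => hbdd t (le_trans hT1 ht)) (c := P v / 16) (by linarith)
        set wt : ℝ := (volume {x : EuclideanSpace ℝ (Fin 2) | t ≤ |v x|}).toReal with hwt
        have htge1 : 1 ≤ t := le_trans hT1 htT
        have hwtpos : 0 < wt :=
          ENNReal.toReal_pos (hbdd t htge1) (hfin t htge1)
        set η : ℝ := P v / 16 / (wt + 1) with hη
        have hηpos : 0 < η := by
          apply div_pos (by linarith)
          linarith
        -- continuity of G at t
        obtain ⟨ε₁, hε₁, hG_near⟩ : ∃ ε₁ : ℝ, 0 < ε₁ ∧ ∀ s : ℝ, |s - t| ≤ ε₁ →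
            |G s - G t| ≤ η := by
          obtain ⟨δ, hδ, hδ'⟩ := Metric.continuousAt_iff.1 hGcont.continuousAt η hηpos
          refine ⟨δ / 2, by linarith, fun s hs => ?_⟩
          have := hδ' (show dist s t < δ by rw [Real.dist_eq]; linarith)
          rw [Real.dist_eq] at this
          linarith
        -- continuity of the measure from above at t
        obtain ⟨n₁, hn₁⟩ : ∃ n₁ : ℕ,
            (volume {x : EuclideanSpace ℝ (Fin 2) | t - 1/((n₁:ℝ)+1) ≤ |v x|}).toReal
              < 2 * wt := by
          have hiterB : ⋂ n : ℕ, {x : EuclideanSpace ℝ (Fin 2) | t - 1/((n:ℝ)+1) ≤ |v x|}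
              = {x : EuclideanSpace ℝ (Fin 2) | t ≤ |v x|} := by
            ext x
            simp only [Set.mem_iInter, Set.mem_setOf_eq]
            constructor
            · intro hx
              by_contra h
              push_neg at h
              obtain ⟨n, hn⟩ := exists_nat_one_div_lt (show (0:ℝ) < t - |v x| by linarith)
              have := hx n
              linarith
            · intro hx n
              have : (0:ℝ) < 1/((n:ℝ)+1) := by positivity
              linarith
          have hBtend := tendsto_measure_iInter_atTop
            (μ := (volume : Measure (EuclideanSpace ℝ (Fin 2))))
            (s := fun n : ℕ => {x : EuclideanSpace ℝ (Fin 2) | t - 1/((n:ℝ)+1) ≤ |v x|})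
            (fun n => (hmeas_ge _).nullMeasurableSet)
            (fun i j hij => fun x hx => by
              simp only [Set.mem_setOf_eq] at hx ⊢
              have h1 : 1/((j:ℝ)+1) ≤ 1/((i:ℝ)+1) := by
                apply one_div_le_one_div_of_le (by positivity)
                have : (i:ℝ) ≤ (j:ℝ) := by exact_mod_cast hij
                linarith
              linarith)
            ⟨0, by
              apply hfin
              simp only [Nat.cast_zero]
              simp only [hTdef] at htT
              norm_num
              linarith⟩
          rw [hiterB] at hBtend
          have hBtendR := (ENNReal.tendsto_toReal (hfin t htge1)).comp hBtend
          have hlt : (volume {x : EuclideanSpace ℝ (Fin 2) | t ≤ |v x|}).toReal < 2 * wt := by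
            rw [← hwt]; linarith
          obtain ⟨n₁, hn₁⟩ := (hBtendR.eventually (eventually_lt_nhds hlt)).exists
          exact ⟨n₁, hn₁⟩
        set ε : ℝ := min (ε₁/2) (1/((n₁:ℝ)+1)) with hε
        have hεpos : 0 < ε := lt_min (by linarith) (by positivity)
        have hεle1 : ε ≤ 1 := le_trans (min_le_right _ _) (by
          rw [div_le_one (by positivity)]
          linarith [Nat.cast_nonneg (α := ℝ) n₁])
        have hεle2 : ε ≤ ε₁ := le_trans (min_le_left _ _) (by linarith)
        set a : ℝ := t - ε with hadef
        set b : ℝ := t + ε with hbdef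
        have htn₀ : (n₀:ℝ) + 1 ≤ t := htT
        have ha : 0 < a := by simp only [hadef]; linarith
        have hab : a < b := by simp only [hadef, hbdef]; linarith
        obtain ⟨ψ, φ, h1, h2, h3, h4, h5, h6, h7, h8⟩ := aux_psi ha hab
        refine ⟨a, b, ha, hab, ψ, φ, h1, h2, h3, h4, h5, h6, h8, ?_⟩
        -- window bound for the truncated values
        have hwin : ∀ s : ℝ, a ≤ |s| → |G (ψ s)| ≤ |G t| + η := by
          intro s hs
          have hψa : a ≤ |ψ s| := h7 s hs
          have hψb : |ψ s| ≤ b := h6 s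
          have hdist : abs (|ψ s| - t) ≤ ε₁ := by
            rw [abs_le]
            constructor
            · simp only [hadef] at hψa; linarith
            · simp only [hbdef] at hψb; linarith
          have h9 : |G (|ψ s|) - G t| ≤ η := hG_near _ hdist
          have h10 : |G (ψ s)| = |G (|ψ s|)| := by rw [hGabs]
          rw [h10]
          calc |G (|ψ s|)| ≤ |G t| + |G (|ψ s|) - G t| := by
                have := abs_sub_abs_le_abs_sub (G (|ψ s|)) (G t)
                linarith [abs_abs (G (|ψ s|))]
            _ ≤ |G t| + η := by linarith
        obtain ⟨K, hK, hKb⟩ := aux_G_quad hgc hgodd hρ hlim hG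
          (show (0:ℝ) < b by simp only [hbdef]; linarith)
        have hψcont : Continuous ψ := by
          rw [continuous_iff_continuousAt]
          exact fun s => (h3 s).continuousAt
        have hψsq : ∀ x, (ψ (v x))^2 ≤ (v x)^2 := by
          intro x
          rw [← sq_abs (ψ (v x)), ← sq_abs (v x)]
          exact pow_le_pow_left₀ (abs_nonneg _) (h5 _) 2
        have hIGψ : Integrable (fun x => G (ψ (v x)))
            (volume : Measure (EuclideanSpace ℝ (Fin 2))) := by
          refine Integrable.mono' (hIv2.const_mul K)
            ((hGcont.comp (hψcont.comp hvcont)).aestronglyMeasurable)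
            (Eventually.of_forall (fun x => ?_))
          rw [Real.norm_eq_abs]
          have h9 : |G (ψ (v x))| ≤ K * (ψ (v x))^2 := hKb _ (h6 _)
          nlinarith [hψsq x]
        set s₂ : Set (EuclideanSpace ℝ (Fin 2)) := {x | a < |v x|} with hs₂
        have hs₂m : MeasurableSet s₂ := hmeas_gt a
        have han₀ : (n₀:ℝ) ≤ a := by simp only [hadef]; linarith
        have ha1 : (1:ℝ) ≤ a := le_trans hn₀1 han₀
        have hs₂sub1 : s₂ ⊆ {x : EuclideanSpace ℝ (Fin 2) | 1 ≤ |v x|} :=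
          fun x hx => le_trans ha1 (le_of_lt hx)
        have hs₂fin : volume s₂ ≠ ⊤ :=
          fun hcon => hfin 1 le_rfl (eq_top_iff.2 (hcon ▸ measure_mono hs₂sub1))
        have hsplitψ := integral_add_compl hs₂m hIGψ
        have hsplitv := integral_add_compl hs₂m hIGv
        have hcomp_eq : (∫ x in s₂ᶜ, G (ψ (v x))) = ∫ x in s₂ᶜ, G (v x) := by
          apply setIntegral_congr_fun hs₂m.compl
          intro x hx
          simp only [hs₂, Set.mem_compl_iff, Set.mem_setOf_eq, not_lt] at hx
          show G (ψ (v x)) = G (v x)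
          rw [h4 (v x) hx]
        have hsub₀ : s₂ ⊆ {x : EuclideanSpace ℝ (Fin 2) | (n₀:ℝ) < |v x|} :=
          fun x hx => lt_of_le_of_lt han₀ hx
        have hb1 : |∫ x in s₂, G (v x)| ≤ P v / 8 := by
          have h9 : |∫ x in s₂, G (v x)| ≤ ∫ x in s₂, |G (v x)| := by
            simpa [Real.norm_eq_abs] using
              norm_integral_le_integral_norm (μ := volume.restrict s₂) (fun x => G (v x))
          have h10 : (∫ x in s₂, |G (v x)|) ≤
              ∫ x in {x : EuclideanSpace ℝ (Fin 2) | (n₀:ℝ) < |v x|}, |G (v x)| :=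
            setIntegral_mono_set hIGv.abs.integrableOn
              (Eventually.of_forall fun x => abs_nonneg _) hsub₀.eventuallyLE
          linarith
        have hs₂subB : s₂ ⊆ {x : EuclideanSpace ℝ (Fin 2) | t - 1/((n₁:ℝ)+1) ≤ |v x|} := by
          intro x hx
          have h9 : ε ≤ 1/((n₁:ℝ)+1) := min_le_right _ _
          have h10 : a < |v x| := hx
          simp only [Set.mem_setOf_eq]
          simp only [hadef] at h10
          linarith
        have hBfin : volume {x : EuclideanSpace ℝ (Fin 2) | t - 1/((n₁:ℝ)+1) ≤ |v x|} ≠ ⊤ := by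
          apply hfin
          have h9 : 1/((n₁:ℝ)+1) ≤ 1 := by
            rw [div_le_one (by positivity)]
            linarith [Nat.cast_nonneg (α := ℝ) n₁]
          simp only [hTdef] at htT
          linarith
        have hμs₂ : (volume s₂).toReal < 2 * wt :=
          lt_of_le_of_lt (ENNReal.toReal_mono hBfin (measure_mono hs₂subB)) hn₁
        have hb2 : |∫ x in s₂, G (ψ (v x))| ≤ (|G t| + η) * (2 * wt) := by
          have h9 : |∫ x in s₂, G (ψ (v x))| ≤ ∫ x in s₂, |G (ψ (v x))| := by
            simpa [Real.norm_eq_abs] using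
              norm_integral_le_integral_norm (μ := volume.restrict s₂) (fun x => G (ψ (v x)))
          have h10 : (∫ x in s₂, |G (ψ (v x))|) ≤ ∫ _x in s₂, (|G t| + η) := by
            refine setIntegral_mono_on hIGψ.abs.integrableOn
              (integrableOn_const hs₂fin) hs₂m ?_
            intro x hx
            exact hwin (v x) (le_of_lt hx)
          have h11 : (∫ _x in s₂, (|G t| + η)) = (volume s₂).toReal * (|G t| + η) := by
            rw [setIntegral_const, smul_eq_mul, Measure.real]
          have h12 : (volume s₂).toReal * (|G t| + η) ≤ 2 * wt * (|G t| + η) := by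
            apply mul_le_mul_of_nonneg_right hμs₂.le
            positivity
          calc |∫ x in s₂, G (ψ (v x))| ≤ ∫ x in s₂, |G (ψ (v x))| := h9
            _ ≤ ∫ _x in s₂, (|G t| + η) := h10
            _ = (volume s₂).toReal * (|G t| + η) := h11
            _ ≤ 2 * wt * (|G t| + η) := h12
            _ = (|G t| + η) * (2 * wt) := by ring
        have hη2 : η * (2 * wt) ≤ P v / 8 := by
          rw [hη, div_mul_eq_mul_div, div_le_iff₀ (by linarith : (0:ℝ) < wt + 1)]
          nlinarith
        have hGtwt : |G t| * wt < P v / 16 := hsm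
        have hfinal1 : (|G t| + η) * (2 * wt) ≤ P v / 4 := by nlinarith
        have hPv_eq : (∫ x in s₂, G (v x)) + (∫ x in s₂ᶜ, G (v x)) = P v := by
          rw [hP v]; exact hsplitv
        have habs1 : -(P v / 4) ≤ ∫ x in s₂, G (ψ (v x)) := by
          have := neg_abs_le (∫ x in s₂, G (ψ (v x)))
          linarith
        have habs2 : (∫ x in s₂, G (v x)) ≤ P v / 8 := by
          have := le_abs_self (∫ x in s₂, G (v x))
          linarith
        have : (∫ x, G (ψ (v x))) =
            (∫ x in s₂, G (ψ (v x))) + (∫ x in s₂ᶜ, G (v x)) := by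
          rw [← hcomp_eq]
          exact hsplitψ.symm
        rw [this]
        have h13 : (∫ x in s₂ᶜ, G (v x)) = P v - ∫ x in s₂, G (v x) := by linarith
        rw [h13]
        linarith
    -- common continuation: scaling + IVT
    have hψcont : Continuous ψ := by
      rw [continuous_iff_continuousAt]; exact fun s => (hψd s).continuousAt
    set u : EuclideanSpace ℝ (Fin 2) → ℝ := fun x => ψ (v x) with hu
    have hucont : Continuous u := hψcont.comp hvcont
    obtain ⟨K, hK, hKb⟩ := aux_G_quad hgc hgodd hρ hlim hG (lt_trans ha hab)
    have husq : ∀ x, (u x)^2 ≤ (v x)^2 := fun x => by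
      rw [← sq_abs (u x), ← sq_abs (v x)]
      exact pow_le_pow_left₀ (abs_nonneg _) (hψabs _) 2
    have hdomK : Integrable (fun x => K * (v x)^2) volume := hIv2.const_mul K
    have hbndθ : ∀ θ : ℝ, |θ| ≤ 1 → ∀ x, |G (θ * u x)| ≤ K * (v x)^2 := by
      intro θ hθ x
      have h1 : |θ * u x| ≤ b := by
        rw [abs_mul]
        calc |θ| * |u x| ≤ 1 * b :=
              mul_le_mul hθ (hψb _) (abs_nonneg _) zero_le_one
          _ = b := one_mul b
      have h2 := hKb _ h1
      have h3 : (θ * u x)^2 ≤ (v x)^2 := by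
        have h5 : θ^2 ≤ 1 := by
          rw [← one_pow 2, ← sq_abs θ]
          exact pow_le_pow_left₀ (abs_nonneg _) hθ 2
        nlinarith [sq_nonneg (u x), husq x]
      nlinarith
    set F : ℝ → ℝ := fun θ => ∫ x, G (θ * u x) with hF
    have hFcont : ContinuousOn F (Set.Icc 0 1) := by
      apply continuousOn_of_dominated (bound := fun x => K * (v x)^2)
      · intro θ _
        exact (hGcont.comp (continuous_const.mul hucont)).aestronglyMeasurable
      · intro θ hθ
        exact Eventually.of_forall (fun x => by
          rw [Real.norm_eq_abs]
          exact hbndθ θ (by rw [abs_of_nonneg hθ.1]; exact hθ.2) x)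
      · exact hdomK
      · exact Eventually.of_forall (fun x =>
          (hGcont.comp (continuous_id.mul continuous_const)).continuousOn)
    have hIu2 : Integrable (fun x => (u x)^2) volume := by
      refine Integrable.mono' hIv2 ((hucont.pow 2).aestronglyMeasurable)
        (Eventually.of_forall fun x => ?_)
      rw [Real.norm_eq_abs, abs_of_nonneg (sq_nonneg _)]
      exact husq x
    have hLpos : 0 < ∫ x, (u x)^2 := by
      rw [integral_pos_iff_support_of_nonneg (fun x => sq_nonneg _) hIu2]
      rw [pos_iff_ne_zero]
      intro h0
      apply hvne
      have hae : ∀ᵐ x ∂(volume : Measure (EuclideanSpace ℝ (Fin 2))),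
          x ∉ Function.support (fun x => (u x)^2) := by
        rw [← measure_eq_zero_iff_ae_notMem]
        exact h0
      filter_upwards [hae] with x hx
      rw [Function.mem_support, not_not] at hx
      have h1 : u x = 0 := by
        have := sq_nonneg (u x)
        nlinarith
      simpa using hψ0 _ h1
    set θseq : ℕ → ℝ := fun n => 1/((n:ℝ)+2) with hθseq
    have hθpos : ∀ n, 0 < θseq n := fun n => by simp only [hθseq]; positivity
    have hθlt1 : ∀ n, θseq n < 1 := fun n => by
      simp only [hθseq]
      rw [div_lt_one (by positivity)]
      linarith [Nat.cast_nonneg (α := ℝ) n]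
    have hneg : ∃ N : ℕ, F (θseq N) < 0 := by
      have hlimit := tendsto_integral_of_dominated_convergence (μ := volume)
        (F := fun (n : ℕ) x => G (θseq n * u x) / (θseq n)^2)
        (f := fun x => -(ρ/2) * (u x)^2)
        (bound := fun x => K * (v x)^2)
        (fun n => ((hGcont.comp (continuous_const.mul hucont)).div_const _).aestronglyMeasurable)
        hdomK
        (fun n => Eventually.of_forall (fun x => by
          have hθn := hθpos n
          rw [Real.norm_eq_abs, abs_div, abs_of_pos (by positivity : (0:ℝ) < (θseq n)^2)]
          rw [div_le_iff₀ (by positivity : (0:ℝ) < (θseq n)^2)]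
          have h1 : |θseq n * u x| ≤ b := by
            rw [abs_mul]
            calc |θseq n| * |u x| ≤ 1 * b :=
                mul_le_mul (by rw [abs_of_pos hθn]; exact (hθlt1 n).le) (hψb _)
                  (abs_nonneg _) zero_le_one
              _ = b := one_mul b
          have h2 := hKb _ h1
          show |G (θseq n * u x)| ≤ K * (v x)^2 * (θseq n)^2
          have h3 : K * (θseq n * u x)^2 = K * (θseq n)^2 * (u x)^2 := by ring
          have h4 : K * (θseq n)^2 * (u x)^2 ≤ K * (θseq n)^2 * (v x)^2 :=
            mul_le_mul_of_nonneg_left (husq x) (by positivity)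
          nlinarith))
        (Eventually.of_forall (fun x => by
          simp only [hθseq]
          exact aux_G_ratio hgc hgodd hρ hlim hG (u x)))
      have hlimneg : (∫ x, -(ρ/2) * (u x)^2) < 0 := by
        rw [integral_const_mul]
        nlinarith [mul_pos hρ hLpos]
      obtain ⟨N, hN⟩ := (hlimit.eventually (eventually_lt_nhds hlimneg)).exists
      refine ⟨N, ?_⟩
      have hθN := hθpos N
      have hF_eq : F (θseq N) = (θseq N)^2 * ∫ x, G (θseq N * u x) / (θseq N)^2 := by
        rw [← integral_const_mul]
        simp only [hF]
        apply integral_congr_ae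
        apply Eventually.of_forall
        intro x
        field_simp
      rw [hF_eq]
      exact mul_neg_of_pos_of_neg (by positivity) hN
    obtain ⟨N, hN⟩ := hneg
    have hF1 : 0 < F 1 := by
      have heq : F 1 = ∫ x, G (ψ (v x)) := by
        simp only [hF, hu, one_mul]
      rw [heq]
      exact hF1pos
    have hθN1 : θseq N ≤ 1 := (hθlt1 N).le
    have hsub : Set.Icc (θseq N) 1 ⊆ Set.Icc (0:ℝ) 1 :=
      Set.Icc_subset_Icc (hθpos N).le le_rfl
    obtain ⟨θ₀, hθ₀mem, hθ₀F⟩ :=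
      intermediate_value_Icc hθN1 (hFcont.mono hsub) (Set.mem_Icc.2 ⟨hN.le, hF1.le⟩)
    have hθ₀pos : 0 < θ₀ := lt_of_lt_of_le (hθpos N) hθ₀mem.1
    have hθ₀le1 : θ₀ ≤ 1 := hθ₀mem.2
    -- the competitor
    set w : EuclideanSpace ℝ (Fin 2) → ℝ := fun x => θ₀ * u x with hw
    have hwcont : Continuous w := continuous_const.mul hucont
    have hfd : ∀ x, HasFDerivAt w ((θ₀ * φ (v x)) • fderiv ℝ v x) x := by
      intro x
      have h1 := (hψd (v x)).comp_hasFDerivAt x (hvH.2.1 x).hasFDerivAt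
      have h2 := h1.const_smul θ₀
      have h3 : (θ₀ • (ψ ∘ v)) = w := by
        funext y
        simp [hw, hu, Function.comp, smul_eq_mul]
      rw [h3] at h2
      rw [smul_smul] at h2
      exact h2
    have hwdiff : Differentiable ℝ w := fun x => (hfd x).differentiableAt
    have hwfd : ∀ x, fderiv ℝ w x = (θ₀ * φ (v x)) • fderiv ℝ v x :=
      fun x => (hfd x).fderiv
    have hsc1 : ∀ x, |θ₀ * φ (v x)| ≤ 1 := by
      intro x
      rw [abs_mul, abs_of_pos hθ₀pos, abs_of_nonneg (hφ01 (v x)).1]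
      nlinarith [(hφ01 (v x)).1, (hφ01 (v x)).2]
    have hwfd_norm : ∀ x, ‖fderiv ℝ w x‖ ≤ ‖fderiv ℝ v x‖ := by
      intro x
      rw [hwfd x, norm_smul, Real.norm_eq_abs]
      exact mul_le_of_le_one_left (norm_nonneg _) (hsc1 x)
    have hwmem2 : MemLp w 2 volume := by
      refine MemLp.of_le hvH.1 hwcont.aestronglyMeasurable
        (Eventually.of_forall fun x => ?_)
      rw [Real.norm_eq_abs, Real.norm_eq_abs]
      show |θ₀ * u x| ≤ |v x|
      rw [abs_mul]
      calc |θ₀| * |u x| ≤ 1 * |v x| :=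
            mul_le_mul (by rw [abs_of_pos hθ₀pos]; exact hθ₀le1) (hψabs _)
              (abs_nonneg _) zero_le_one
        _ = |v x| := one_mul _
    have hwmemf : MemLp (fun x => fderiv ℝ w x) 2 volume := by
      have heq : (fun x => fderiv ℝ w x) = fun x => (θ₀ * φ (v x)) • fderiv ℝ v x :=
        funext hwfd
      rw [heq]
      refine MemLp.of_le hvH.2.2
        (((continuous_const.mul (hφc.comp hvcont)).aestronglyMeasurable).smul hvH.2.2.1)
        (Eventually.of_forall fun x => ?_)
      rw [norm_smul, Real.norm_eq_abs]
      exact mul_le_of_le_one_left (norm_nonneg _) (hsc1 x)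
    have hwne : ¬ w =ᵐ[volume] 0 := by
      intro hcon
      apply hvne
      filter_upwards [hcon] with x hx
      have hx' : θ₀ * u x = 0 := by simpa [hw] using hx
      have h1 : u x = 0 := (mul_eq_zero.1 hx').resolve_left (ne_of_gt hθ₀pos)
      simpa using hψ0 _ h1
    have hwP : P w = 0 := by
      rw [hP w, ← hθ₀F]
    have hmw : m ≤ S w := hlb ⟨w, ⟨⟨hwmem2, hwdiff, hwmemf⟩, hwne, hwP⟩, rfl⟩
    rw [hS w, hwP, sub_zero] at hmw
    have hIfw2 : Integrable (fun x => ‖fderiv ℝ w x‖^2) volume := by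
      have h := hwmemf.integrable_norm_rpow two_ne_zero ENNReal.ofNat_ne_top
      refine h.congr (Eventually.of_forall fun x => ?_)
      show ‖(fderiv ℝ w x : _)‖ ^ (ENNReal.toReal 2) = _
      rw [show (ENNReal.toReal 2) = ((2:ℕ):ℝ) by simp, Real.rpow_natCast]
    have hTle : Tfun w ≤ Tfun v := by
      show (1/2 : ℝ) * (∫ x, ‖fderiv ℝ w x‖^2) ≤ (1/2 : ℝ) * ∫ x, ‖fderiv ℝ v x‖^2
      apply mul_le_mul_of_nonneg_left _ (by norm_num)
      apply integral_mono hIfw2 hIdv2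
      intro x
      have h1 := hwfd_norm x
      show ‖fderiv ℝ w x‖^2 ≤ ‖fderiv ℝ v x‖^2
      nlinarith [norm_nonneg (fderiv ℝ w x), norm_nonneg (fderiv ℝ v x)]
    linarith
end GB3
end
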